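/- arXiv:2601.00672 — 5 statements merged into one kernel-verified Lean document; each statement's English description precedes it below -/
import Mathlib

section
/- Let G = (V, E) be a simple undirected graph with vertex set V = {1, ..., N}, and let H_G(ℝ) denote the subgroup of GL_N(ℝ) generated by all invertible G-sparse matrices. Then H_G(ℝ) = GL_N(ℝ) if and only if the graph G is connected. -/
open Matrix
open scoped MatrixGroups

/-- A matrix `W` is `G`-sparse if, for `i ≠ j`, the off-diagonal entries `W i j`
may be nonzero only when `{i, j}` is an edge of `G` (diagonal entries are free). -/
def IsGSparse {N : ℕ} (G : SimpleGraph (Fin N)) (W : Matrix (Fin N) (Fin N) ℝ) : Prop :=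
  ∀ i j : Fin N, i ≠ j → ¬ G.Adj i j → W i j = 0

/-- `H_G(ℝ)`: the subgroup of `GL_N(ℝ)` generated by all invertible `G`-sparse matrices. -/
def sparseSubgroup {N : ℕ} (G : SimpleGraph (Fin N)) : Subgroup (GL (Fin N) ℝ) :=
  Subgroup.closure { A : GL (Fin N) ℝ | IsGSparse G (A : Matrix (Fin N) (Fin N) ℝ) }

namespace SparseAux

variable {N : ℕ}

/-- The transvection matrix as a unit. -/
def tGL (i j : Fin N) (hij : i ≠ j) (c : ℝ) : GL (Fin N) ℝ :=
  ⟨transvection i j c, transvection i j (-c),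
    by rw [transvection_mul_transvection_same _ _ hij]; simp,
    by rw [transvection_mul_transvection_same _ _ hij]; simp⟩

@[simp] lemma tGL_val (i j : Fin N) (hij : i ≠ j) (c : ℝ) :
    (tGL i j hij c : Matrix (Fin N) (Fin N) ℝ) = transvection i j c := rfl

lemma transvection_comm (i j k : Fin N) (hik : i ≠ k) (hkj : k ≠ j) (hij : i ≠ j) (c : ℝ) :
    transvection i j c * transvection k j 1 * transvection i k c
      = transvection i k c * transvection k j 1 := by
  have e0 : ∀ d e : ℝ, Matrix.single i k d * Matrix.single k j e
      = Matrix.single i j (d * e) := fun d e =>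
    Matrix.single_mul_single_same (c := d) i k j e
  have z1 : ∀ d e : ℝ, Matrix.single k j d * Matrix.single i k e = 0 := fun d e =>
    Matrix.single_mul_single_of_ne (c := d) k j i hij.symm e
  have z2 : ∀ d e : ℝ, Matrix.single i j d * Matrix.single i k e = 0 := fun d e =>
    Matrix.single_mul_single_of_ne (c := d) i j i hij.symm e
  have z3 : ∀ d e : ℝ, Matrix.single i j d * Matrix.single k j e = 0 := fun d e =>
    Matrix.single_mul_single_of_ne (c := d) i j k hkj.symm e
  simp only [transvection, Matrix.add_mul, Matrix.mul_add, Matrix.one_mul, Matrix.mul_one,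
    e0, z1, z2, z3, add_zero, mul_one, Matrix.zero_mul, Matrix.mul_zero]
  abel

lemma tGL_mem_of_adj {G : SimpleGraph (Fin N)} {i j : Fin N} (h : G.Adj i j) (c : ℝ) :
    tGL i j h.ne c ∈ sparseSubgroup G := by
  apply Subgroup.subset_closure
  intro a b hab hnadj
  simp only [tGL_val, transvection, Matrix.add_apply, Matrix.one_apply_ne hab]
  rw [Matrix.single_apply_of_ne]
  · simp
  · rintro ⟨rfl, rfl⟩
    exact hnadj h

lemma tGL_mem {G : SimpleGraph (Fin N)} {i j : Fin N} (w : G.Walk i j) (hij : i ≠ j) (c : ℝ) :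
    tGL i j hij c ∈ sparseSubgroup G := by
  induction w generalizing c with
  | nil => exact absurd rfl hij
  | @cons i k j hadj p ih =>
    by_cases hkj : k = j
    · subst hkj; exact tGL_mem_of_adj hadj c
    · have hik : i ≠ k := hadj.ne
      have hcomm : tGL i j hij c * tGL k j hkj 1 * tGL i k hik c
          = tGL i k hik c * tGL k j hkj 1 := by
        apply Units.ext
        simp only [Units.val_mul, tGL_val]
        exact transvection_comm i j k hik hkj hij c
      have key : tGL i j hij c =
          tGL i k hik c * tGL k j hkj 1 * (tGL i k hik c)⁻¹ * (tGL k j hkj 1)⁻¹ := by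
        rw [← hcomm]
        group
      rw [key]
      exact mul_mem (mul_mem (mul_mem (tGL_mem_of_adj hadj c) (ih hkj 1))
        (inv_mem (tGL_mem_of_adj hadj c))) (inv_mem (ih hkj 1))

/-- Forward direction: connected implies the sparse subgroup is everything. -/
lemma eq_top_of_connected {G : SimpleGraph (Fin N)} (hG : G.Connected) :
    sparseSubgroup G = ⊤ := by
  rw [eq_top_iff]
  intro A _
  have hdet : (A : Matrix (Fin N) (Fin N) ℝ).det ≠ 0 :=
    ((Matrix.isUnit_iff_isUnit_det _).1 A.isUnit).ne_zero
  have : ∀ M : Matrix (Fin N) (Fin N) ℝ, M.det ≠ 0 →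
      ∀ B : GL (Fin N) ℝ, (B : Matrix (Fin N) (Fin N) ℝ) = M → B ∈ sparseSubgroup G := by
    intro M hM
    refine Matrix.diagonal_transvection_induction_of_det_ne_zero
      (fun M => ∀ B : GL (Fin N) ℝ, (B : Matrix (Fin N) (Fin N) ℝ) = M → B ∈ sparseSubgroup G)
      M hM ?_ ?_ ?_
    · intro D hD
      intro B hB
      apply Subgroup.subset_closure
      intro a b hab _
      rw [hB]
      exact Matrix.diagonal_apply_ne D hab
    · intro t B hB
      have hw : G.Reachable t.i t.j := hG.preconnected t.i t.j
      obtain ⟨w⟩ := hw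
      have := tGL_mem w t.hij t.c
      convert this using 1
      apply Units.ext
      rw [hB]
      rfl
    · intro P Q hP hQ ihP ihQ B hB
      have hPu : IsUnit P := (Matrix.isUnit_iff_isUnit_det P).2 (isUnit_iff_ne_zero.2 hP)
      have hQu : IsUnit Q := (Matrix.isUnit_iff_isUnit_det Q).2 (isUnit_iff_ne_zero.2 hQ)
      let BP : GL (Fin N) ℝ := hPu.unit
      let BQ : GL (Fin N) ℝ := hQu.unit
      have hB' : B = BP * BQ := by
        apply Units.ext
        simp only [Units.val_mul]
        rw [hB, hPu.unit_spec, hQu.unit_spec]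
      rw [hB']
      exact mul_mem (ihP BP hPu.unit_spec) (ihQ BQ hQu.unit_spec)
  exact this A.val hdet A rfl

/-- The submodule of vectors supported on `{i | P i}`. -/
def supp (P : Fin N → Prop) : Submodule ℝ (Fin N → ℝ) where
  carrier := {v | ∀ i, ¬ P i → v i = 0}
  add_mem' ha hb i hi := by simp [ha i hi, hb i hi]
  zero_mem' i _ := rfl
  smul_mem' c v hv i hi := by simp [hv i hi]

/-- If an invertible matrix preserves a "support" sparsity pattern, so does its inverse. -/
lemma inv_supported (A : GL (Fin N) ℝ) (P : Fin N → Prop)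
    (hA : ∀ i k, ¬ P i → P k → (A : Matrix (Fin N) (Fin N) ℝ) i k = 0) :
    ∀ i k, ¬ P i → P k → (↑A⁻¹ : Matrix (Fin N) (Fin N) ℝ) i k = 0 := by
  classical
  set M : Matrix (Fin N) (Fin N) ℝ := A.val with hM
  set M' : Matrix (Fin N) (Fin N) ℝ := (A⁻¹).val with hM'
  have hMM' : M * M' = 1 := by
    rw [← Units.val_mul, mul_inv_cancel]; rfl
  have hM'M : M' * M = 1 := by
    rw [← Units.val_mul, inv_mul_cancel]; rfl
  -- the linear equivalence given by A
  let f : (Fin N → ℝ) ≃ₗ[ℝ] (Fin N → ℝ) :=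
    LinearEquiv.ofLinear (Matrix.toLin' M) (Matrix.toLin' M')
      (by rw [← Matrix.toLin'_mul, hMM', Matrix.toLin'_one])
      (by rw [← Matrix.toLin'_mul, hM'M, Matrix.toLin'_one])
  have hmap : (supp P).map (f : (Fin N → ℝ) →ₗ[ℝ] (Fin N → ℝ)) = supp P := by
    apply Submodule.eq_of_le_of_finrank_le
    · rintro _ ⟨v, hv, rfl⟩
      intro i hi
      show (M *ᵥ v) i = 0
      rw [Matrix.mulVec, dotProduct]
      apply Finset.sum_eq_zero
      intro k _
      by_cases hk : P k
      · rw [hA i k hi hk, zero_mul]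
      · rw [hv k hk, mul_zero]
    · exact le_of_eq (LinearEquiv.finrank_map_eq f (supp P)).symm
  intro i k hi hk
  have hvmem : (Pi.single k (1:ℝ)) ∈ supp P := by
    intro a ha
    rcases eq_or_ne a k with rfl | hak
    · exact absurd hk ha
    · exact Pi.single_eq_of_ne hak 1
  rw [← hmap] at hvmem
  obtain ⟨u, hu, hfu⟩ := hvmem
  have hfu' : M *ᵥ u = Pi.single k (1:ℝ) := by
    simpa [Matrix.toLin'_apply, f] using hfu
  have : M' *ᵥ Pi.single k (1:ℝ) = u := by
    rw [← hfu', Matrix.mulVec_mulVec, hM'M, Matrix.one_mulVec]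
  have := congrFun this i
  rw [Matrix.mulVec_single] at this
  rw [hu i hi] at this
  simpa using this

/-- The subgroup of matrices supported on reachability classes. -/
def reachSubgroup (G : SimpleGraph (Fin N)) : Subgroup (GL (Fin N) ℝ) where
  carrier := {A | ∀ i j, ¬ G.Reachable i j →
    (A : Matrix (Fin N) (Fin N) ℝ) i j = 0 ∧ (↑A⁻¹ : Matrix (Fin N) (Fin N) ℝ) i j = 0}
  one_mem' := by
    intro i j hij
    have hne : i ≠ j := by rintro rfl; exact hij (SimpleGraph.Reachable.refl i)
    constructor <;> simp [Matrix.one_apply_ne hne]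
  mul_mem' := by
    intro A B hA hB i j hij
    constructor
    · show (A.val * B.val) i j = 0
      rw [Matrix.mul_apply]
      apply Finset.sum_eq_zero
      intro k _
      by_cases hik : G.Reachable i k
      · have : ¬ G.Reachable k j := fun h => hij (hik.trans h)
        rw [(hB k j this).1, mul_zero]
      · rw [(hA i k hik).1, zero_mul]
    · rw [_root_.mul_inv_rev]
      show (B⁻¹.val * A⁻¹.val) i j = 0
      rw [Matrix.mul_apply]
      apply Finset.sum_eq_zero
      intro k _
      by_cases hik : G.Reachable i k
      · have : ¬ G.Reachable k j := fun h => hij (hik.trans h)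
        rw [(hA k j this).2, mul_zero]
      · rw [(hB i k hik).2, zero_mul]
  inv_mem' := by
    intro A hA i j hij
    rw [inv_inv]
    exact ⟨(hA i j hij).2, (hA i j hij).1⟩

lemma sparse_subset_reach (G : SimpleGraph (Fin N)) :
    { A : GL (Fin N) ℝ | IsGSparse G (A : Matrix (Fin N) (Fin N) ℝ) } ⊆ reachSubgroup G := by
  intro A hA i j hij
  have hfirst : ∀ a b, ¬ G.Reachable a b → (A : Matrix (Fin N) (Fin N) ℝ) a b = 0 := by
    intro a b hab
    have hne : a ≠ b := by rintro rfl; exact hab (SimpleGraph.Reachable.refl _)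
    have hnadj : ¬ G.Adj a b := fun h => hab h.reachable
    exact hA a b hne hnadj
  refine ⟨hfirst i j hij, ?_⟩
  have := inv_supported A (fun a => G.Reachable a j) (fun a k ha hk => by
    refine hfirst a k (fun h => ha (h.trans hk)))
  exact this i j hij (SimpleGraph.Reachable.refl j)

end SparseAux

/-- `H_G(ℝ) = GL_N(ℝ)` if and only if the graph `G` is connected. -/
theorem sparseSubgroup_eq_top_iff_connected {N : ℕ} (hN : 0 < N)
    (G : SimpleGraph (Fin N)) :
    sparseSubgroup G = ⊤ ↔ G.Connected := by
  constructor
  · intro htop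
    have hne : Nonempty (Fin N) := ⟨⟨0, hN⟩⟩
    rw [SimpleGraph.connected_iff]
    refine ⟨?_, hne⟩
    intro i j
    by_contra hij
    have hne' : i ≠ j := by rintro rfl; exact hij (SimpleGraph.Reachable.refl _)
    have hle : sparseSubgroup G ≤ SparseAux.reachSubgroup G :=
      (Subgroup.closure_le _).2 (SparseAux.sparse_subset_reach G)
    have hmem : SparseAux.tGL i j hne' 1 ∈ SparseAux.reachSubgroup G := by
      apply hle
      rw [htop]; trivial
    have := (hmem i j hij).1
    rw [SparseAux.tGL_val] at this
    simp [Matrix.transvection, Matrix.add_apply, Matrix.one_apply_ne hne'] at this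
  · intro hG
    exact SparseAux.eq_top_of_connected hG
end

section
/- Let G = (V, E) be a connected simple undirected graph with vertex set V = {1, ..., N}. Then for every pair of distinct indices i ≠ j in {1, ..., N} and every t ∈ ℝ, the transvection matrix E_{ij}(t) = I_N + t·e_{ij} belongs to the subgroup H_G(ℝ) of GL_N(ℝ) generated by all invertible G-sparse matrices. -/
open Matrix
open scoped MatrixGroups

def myE {N : ℕ} (a b : Fin N) : Matrix (Fin N) (Fin N) ℝ := single a b 1

lemma myE_eq {N : ℕ} (a b : Fin N) (c : ℝ) :
    single a b c = c • myE a b := by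
  ext x y; simp [myE, single]

lemma transvection_comm {N : ℕ} {i k j : Fin N} (hik : i ≠ k) (hkj : k ≠ j) (hij : i ≠ j) (t : ℝ) :
    Matrix.transvection i k t * Matrix.transvection k j 1 *
      Matrix.transvection i k (-t) * Matrix.transvection k j (-1)
      = (Matrix.transvection i j t : Matrix (Fin N) (Fin N) ℝ) := by
  simp only [Matrix.transvection]
  simp [Matrix.add_mul, Matrix.mul_add, Matrix.single_mul_single_same,
    Matrix.single_mul_single_of_ne, hik.symm, hkj.symm, hij.symm]
  simp only [myE_eq]
  module

/-- The transvection as an element of `GL`. -/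
def tUnit {N : ℕ} (i j : Fin N) (hij : i ≠ j) (t : ℝ) : GL (Fin N) ℝ where
  val := Matrix.transvection i j t
  inv := Matrix.transvection i j (-t)
  val_inv := by rw [Matrix.transvection_mul_transvection_same _ _ hij]; simp
  inv_val := by rw [Matrix.transvection_mul_transvection_same _ _ hij]; simp

lemma tUnit_isGSparse {N : ℕ} (G : SimpleGraph (Fin N)) {i j : Fin N}
    (h : G.Adj i j) (hij : i ≠ j) (t : ℝ) :
    IsGSparse G ((tUnit i j hij t : GL (Fin N) ℝ) : Matrix (Fin N) (Fin N) ℝ) := by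
  intro a b hab hadj
  show Matrix.transvection i j t a b = 0
  rw [Matrix.transvection, Matrix.add_apply, Matrix.one_apply_ne hab]
  rw [Matrix.single]
  simp only [of_apply, zero_add, ite_eq_right_iff, and_imp]
  rintro rfl rfl
  exact absurd h hadj

lemma tUnit_mem {N : ℕ} (G : SimpleGraph (Fin N)) {i j : Fin N} (p : G.Walk i j) :
    ∀ (hij : i ≠ j) (t : ℝ), tUnit i j hij t ∈ sparseSubgroup G := by
  induction p with
  | nil => exact fun hij _ => absurd rfl hij
  | @cons i k j hadj q ih =>
    intro hij t
    by_cases hkj : k = j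
    · subst hkj
      exact Subgroup.subset_closure (tUnit_isGSparse G hadj hij t)
    · have hik : i ≠ k := hadj.ne
      have h1 : ∀ s : ℝ, tUnit i k hik s ∈ sparseSubgroup G := fun s =>
        Subgroup.subset_closure (tUnit_isGSparse G hadj hik s)
      have h2 : ∀ s : ℝ, tUnit k j hkj s ∈ sparseSubgroup G := fun s => ih hkj s
      have key : tUnit i j hij t =
          tUnit i k hik t * tUnit k j hkj 1 * tUnit i k hik (-t) * tUnit k j hkj (-1) := by
        ext1
        show Matrix.transvection i j t = _
        exact (transvection_comm hik hkj hij t).symm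
      rw [key]
      exact mul_mem (mul_mem (mul_mem (h1 t) (h2 1)) (h1 (-t))) (h2 (-1))

/-- If `G` is connected, then for every pair of distinct indices `i ≠ j` and every `t ∈ ℝ`,
the transvection `E_{ij}(t) = I_N + t • e_{ij}` belongs to `H_G(ℝ)`. -/
theorem transvection_mem_sparseSubgroup {N : ℕ} (G : SimpleGraph (Fin N))
    (hG : G.Connected) (i j : Fin N) (hij : i ≠ j) (t : ℝ)
    (A : GL (Fin N) ℝ)
    (hA : (A : Matrix (Fin N) (Fin N) ℝ) = 1 + t • Matrix.single i j (1 : ℝ)) :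
    A ∈ sparseSubgroup G := by
  have hAeq : A = tUnit i j hij t := by
    ext1
    show (A : Matrix (Fin N) (Fin N) ℝ) = Matrix.transvection i j t
    rw [hA, Matrix.transvection, myE_eq i j t, myE_eq i j 1]
    simp
  obtain ⟨p⟩ := hG.preconnected i j
  rw [hAeq]
  exact tUnit_mem G p hij t
end

section
/- Let G = (V, E) be a connected simple undirected graph on N vertices, let M ∈ GL_N(ℝ) be an invertible matrix, and let K ⊂ ℝ^N be a nonempty compact set. Then there exist m ∈ ℕ, invertible G-sparse matrices W^(1), ..., W^(m), and bias vectors b^(1), ..., b^(m+1) ∈ ℝ^N such that the ReLU network defined by z^(0)(x) = x, z^(ℓ)(x) = ReLU(W^(ℓ) z^(ℓ−1)(x) + b^(ℓ)) for ℓ = 1, ..., m, and N(x) = z^(m)(x) + b^(m+1), satisfies N(x) = M x for every x ∈ K. Here ReLU acts componentwise as u ↦ max(u, 0). -/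
open Matrix
open scoped MatrixGroups

/-- One ReLU layer: `z ↦ ReLU (W z + b)`, with ReLU `u ↦ max u 0` applied componentwise. -/
def reluLayer {N : ℕ} (W : Matrix (Fin N) (Fin N) ℝ) (b : Fin N → ℝ)
    (z : Fin N → ℝ) : Fin N → ℝ :=
  fun i => max ((W.mulVec z + b) i) 0

/-- Forward pass through `m` ReLU layers:
`z⁽⁰⁾(x) = x`, `z⁽ˡ⁾(x) = ReLU (W⁽ˡ⁾ z⁽ˡ⁻¹⁾(x) + b⁽ˡ⁾)`. -/
def reluForward {N : ℕ} : (m : ℕ) → (Fin m → Matrix (Fin N) (Fin N) ℝ) →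
    (Fin m → (Fin N → ℝ)) → (Fin N → ℝ) → (Fin N → ℝ)
  | 0, _, _, x => x
  | m + 1, W, b, x =>
      reluLayer (W (Fin.last m)) (b (Fin.last m))
        (reluForward m (fun ℓ => W ℓ.castSucc) (fun ℓ => b ℓ.castSucc) x)

/-- The set of matrices expressible as products of invertible `G`-sparse matrices. -/
def GSparseProd {N : ℕ} (G : SimpleGraph (Fin N)) (M : Matrix (Fin N) (Fin N) ℝ) : Prop :=
  ∃ L : List (Matrix (Fin N) (Fin N) ℝ),
    (∀ A ∈ L, IsUnit A ∧ IsGSparse G A) ∧ L.prod = M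

lemma GSparseProd.mul {N : ℕ} {G : SimpleGraph (Fin N)} {A B : Matrix (Fin N) (Fin N) ℝ}
    (hA : GSparseProd G A) (hB : GSparseProd G B) : GSparseProd G (A * B) := by
  obtain ⟨L, hL, hLp⟩ := hA
  obtain ⟨L', hL', hLp'⟩ := hB
  exact ⟨L ++ L', fun C hC => ((List.mem_append.1 hC).elim (hL C) (hL' C)),
    by rw [List.prod_append, hLp, hLp']⟩

lemma GSparseProd.single {N : ℕ} {G : SimpleGraph (Fin N)} {A : Matrix (Fin N) (Fin N) ℝ}
    (h1 : IsUnit A) (h2 : IsGSparse G A) : GSparseProd G A :=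
  ⟨[A], by simp [h1, h2], by simp⟩

lemma commutator_transvection {n : Type*} [DecidableEq n] [Fintype n] (i j k : n) (c : ℝ)
    (hij : i ≠ j) (hik : i ≠ k) (hkj : k ≠ j) :
    transvection i k c * transvection k j 1 * transvection i k (-c) * transvection k j (-1)
      = transvection i j c := by
  simp only [transvection, add_mul, mul_add, one_mul, mul_one,
    Matrix.single_mul_single_same, Matrix.single_mul_single_of_ne, hij, hik, hkj,
    hij.symm, hik.symm, hkj.symm, Ne, not_false_iff, zero_mul, add_zero, zero_add,
    mul_neg, mul_one, neg_neg, neg_mul]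
  ext a b
  simp only [Matrix.add_apply, Matrix.single, Matrix.of_apply]
  split_ifs <;> simp_all

lemma isUnit_transvection {n : Type*} [DecidableEq n] [Fintype n] {i j : n} (h : i ≠ j) (c : ℝ) :
    IsUnit (transvection i j c) := by
  rw [Matrix.isUnit_iff_isUnit_det, Matrix.det_transvection_of_ne i j h c]
  exact isUnit_one

lemma isGSparse_transvection {N : ℕ} {G : SimpleGraph (Fin N)} {i j : Fin N} (h : G.Adj i j)
    (c : ℝ) : IsGSparse G (transvection i j c) := by
  intro a b hab hnadj
  simp only [transvection, Matrix.add_apply, Matrix.one_apply, hab, if_neg]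
  rw [Matrix.single_apply_of_ne]
  · simp
  · rintro ⟨rfl, rfl⟩
    exact hnadj h

lemma gsparse_transvection_of_walk {N : ℕ} {G : SimpleGraph (Fin N)} {i j : Fin N}
    (p : G.Walk i j) : i ≠ j → ∀ c : ℝ, GSparseProd G (transvection i j c) := by
  induction p with
  | nil => intro h; exact absurd rfl h
  | @cons i k j h q ih =>
    intro hij c
    by_cases hkj : k = j
    · subst hkj
      exact GSparseProd.single (isUnit_transvection hij c) (isGSparse_transvection h c)
    · have hik : i ≠ k := G.ne_of_adj h
      have hkj' := ih hkj
      have base : ∀ d : ℝ, GSparseProd G (transvection i k d) := fun d =>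
        GSparseProd.single (isUnit_transvection hik d) (isGSparse_transvection h d)
      rw [← commutator_transvection i j k c hij hik hkj]
      exact (((base c).mul (hkj' 1)).mul (base (-c))).mul (hkj' (-1))

lemma gsparse_decomposition {N : ℕ} {G : SimpleGraph (Fin N)} (hG : G.Connected)
    {M : Matrix (Fin N) (Fin N) ℝ} (hM : IsUnit M) : GSparseProd G M := by
  have hdet : M.det ≠ 0 := by
    intro h
    rw [Matrix.isUnit_iff_isUnit_det, h] at hM
    simpa using hM
  apply Matrix.diagonal_transvection_induction_of_det_ne_zero _ M hdet
  · intro D hD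
    refine GSparseProd.single ?_ ?_
    · rw [Matrix.isUnit_iff_isUnit_det]
      exact hD.isUnit
    · intro a b hab _
      exact Matrix.diagonal_apply_ne D hab
  · intro t
    obtain ⟨p⟩ := hG.preconnected t.i t.j
    exact Matrix.TransvectionStruct.toMatrix_mk t.i t.j t.hij t.c ▸
      gsparse_transvection_of_walk p t.hij t.c
  · intro A B _ _ hA hB
    exact hA.mul hB

lemma reluForward_snoc {N : ℕ} (m : ℕ) (W : Fin m → Matrix (Fin N) (Fin N) ℝ)
    (b : Fin m → (Fin N → ℝ)) (A : Matrix (Fin N) (Fin N) ℝ) (β : Fin N → ℝ)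
    (x : Fin N → ℝ) :
    reluForward (m + 1) (Fin.snoc W A) (Fin.snoc b β) x
      = reluLayer A β (reluForward m W b x) := by
  simp only [reluForward, Fin.snoc_last, Fin.snoc_castSucc]

/-- Realization of a list-product of matrices by a ReLU network, up to an additive constant. -/
lemma relu_realizes_list {N : ℕ} {G : SimpleGraph (Fin N)}
    (L : List (Matrix (Fin N) (Fin N) ℝ)) (hL : ∀ A ∈ L, IsUnit A ∧ IsGSparse G A)
    (K : Set (Fin N → ℝ)) (hK : IsCompact K) :
    ∃ (m : ℕ) (W : Fin m → Matrix (Fin N) (Fin N) ℝ)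
      (b : Fin m → (Fin N → ℝ)) (c : Fin N → ℝ),
      (∀ ℓ, IsUnit (W ℓ) ∧ IsGSparse G (W ℓ)) ∧
      ∀ x ∈ K, reluForward m W b x = L.prod.mulVec x + c := by
  induction L with
  | nil =>
    refine ⟨0, Fin.elim0, Fin.elim0, 0, fun ℓ => ℓ.elim0, fun x hx => ?_⟩
    simp [reluForward, Matrix.one_mulVec]
  | cons A L ih =>
    obtain ⟨m, W, b, c, hW, hfwd⟩ := ih (fun B hB => hL B (List.mem_cons_of_mem A hB))
    set g : (Fin N → ℝ) → (Fin N → ℝ) := fun x => A.mulVec (L.prod.mulVec x + c) with hg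
    have hgc : Continuous g := by
      have h1 : Continuous fun x : Fin N → ℝ => L.prod.mulVec x + c :=
        ((Matrix.mulVecLin L.prod).continuous_of_finiteDimensional).add continuous_const
      exact (Matrix.mulVecLin A).continuous_of_finiteDimensional.comp h1
    obtain ⟨C, hC⟩ := hK.exists_bound_of_continuousOn hgc.continuousOn
    refine ⟨m + 1, Fin.snoc W A, Fin.snoc b (fun _ => C), A.mulVec c + (fun _ => C), ?_, ?_⟩
    · intro ℓ
      refine Fin.lastCases ?_ ?_ ℓ
      · simpa using hL A (List.mem_cons_self (a := A) (l := L))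
      · intro ℓ'
        simpa using hW ℓ'
    · intro x hx
      rw [reluForward_snoc, hfwd x hx]
      funext i
      have hb : |g x i| ≤ C := le_trans (norm_le_pi_norm (g x) i) (hC x hx)
      have hpos : 0 ≤ g x i + C := by
        have := abs_le.1 hb
        linarith [this.1]
      show max (A.mulVec (L.prod.mulVec x + c) i + C) 0 = _
      rw [max_eq_left hpos]
      have : A.mulVec (L.prod.mulVec x + c) = (A * L.prod).mulVec x + A.mulVec c := by
        rw [Matrix.mulVec_add, ← Matrix.mulVec_mulVec]
      simp only [hg, this, List.prod_cons, Pi.add_apply]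
      ring

/-- Exact representation of an invertible linear map on a compact set by a ReLU network
all of whose weight matrices are invertible and `G`-sparse, for a connected graph `G`:
there are layers `W⁽¹⁾, …, W⁽ᵐ⁾`, biases `b⁽¹⁾, …, b⁽ᵐ⁺¹⁾` such that the network
`x ↦ z⁽ᵐ⁾(x) + b⁽ᵐ⁺¹⁾` equals `x ↦ M x` on `K`. -/
theorem relu_sparse_network_realizes_invertible_linear_map {N : ℕ}
    (G : SimpleGraph (Fin N)) (hG : G.Connected)
    (M : Matrix (Fin N) (Fin N) ℝ) (hM : IsUnit M)
    (K : Set (Fin N → ℝ)) (hK : IsCompact K) (hKne : K.Nonempty) :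
    ∃ (m : ℕ) (W : Fin m → Matrix (Fin N) (Fin N) ℝ)
      (b : Fin m → (Fin N → ℝ)) (bfin : Fin N → ℝ),
      (∀ ℓ, IsUnit (W ℓ) ∧ IsGSparse G (W ℓ)) ∧
      ∀ x ∈ K, reluForward m W b x + bfin = M.mulVec x := by
  obtain ⟨L, hL, hLp⟩ := gsparse_decomposition hG hM
  obtain ⟨m, W, b, c, hW, hfwd⟩ := relu_realizes_list L hL K hK
  refine ⟨m, W, b, -c, hW, fun x hx => ?_⟩
  rw [hfwd x hx, hLp]
  abel
end

section
/- Let σ : ℝ → ℝ and t₀ ∈ ℝ be such that σ is continuously differentiable on an open interval U containing t₀ and σ'(t₀) ≠ 0. Let M ∈ M_N(ℝ) be a matrix. For δ > 0 define the two-layer block T_δ(z) := (1/(δ σ'(t₀))) (σ(δ M z + t₀ 𝟙) − σ(t₀) 𝟙), where 𝟙 ∈ ℝ^N is the all-ones vector and σ is applied componentwise. Then for every R > 0 and every η > 0 there exists δ > 0 such that sup over all z ∈ ℝ^N with ‖z‖_∞ ≤ R of ‖T_δ(z) − M z‖_∞ is at most η. -/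
open Matrix

/-- The two-layer `σ`-block `T_δ(z) = (1 / (δ σ'(t₀))) (σ(δ M z + t₀ 𝟙) - σ(t₀) 𝟙)`
(with `σ` applied componentwise) approximates the linear map `z ↦ M z` uniformly on
sup-norm balls: for every `R > 0` and `η > 0` there is `δ > 0` such that
`‖T_δ(z) - M z‖_∞ ≤ η` whenever `‖z‖_∞ ≤ R`. -/
theorem two_layer_block_approx_linear {N : ℕ} (σ : ℝ → ℝ) (t₀ a b : ℝ)
    (ht₀ : t₀ ∈ Set.Ioo a b) (hσ : ContDiffOn ℝ 1 σ (Set.Ioo a b))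
    (hd : deriv σ t₀ ≠ 0) (M : Matrix (Fin N) (Fin N) ℝ) :
    ∀ R > 0, ∀ η > 0, ∃ δ > 0, ∀ z : Fin N → ℝ, ‖z‖ ≤ R →
      ‖(fun i => (σ (δ * M.mulVec z i + t₀) - σ t₀) / (δ * deriv σ t₀)) - M.mulVec z‖ ≤ η := by
  intro R hR η hη
  set d := deriv σ t₀ with hdd
  have hdiff : DifferentiableAt ℝ σ t₀ :=
    (hσ.differentiableOn one_ne_zero).differentiableAt (isOpen_Ioo.mem_nhds ht₀)
  have hDeriv : HasDerivAt σ d t₀ := hdiff.hasDerivAt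
  set C : ℝ := R * (∑ i, ∑ j, |M i j|) + 1 with hCdef
  have hsum : (0:ℝ) ≤ ∑ i, ∑ j, |M i j| := by positivity
  have hC : (0:ℝ) < C := by positivity
  have hdpos : (0:ℝ) < |d| := abs_pos.mpr hd
  set ε : ℝ := η * |d| / C with hεdef
  have hε : 0 < ε := by positivity
  have hlo := (hasDerivAt_iff_isLittleO.mp hDeriv).def hε
  rw [Metric.eventually_nhds_iff] at hlo
  obtain ⟨r, hr, hball⟩ := hlo
  refine ⟨r / (2 * C), by positivity, ?_⟩
  set δ : ℝ := r / (2 * C) with hδdef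
  have hδ : 0 < δ := by positivity
  intro z hz
  -- bound on entries of M z
  have hw : ∀ i, |M.mulVec z i| ≤ C - 1 := by
    intro i
    have h1 : |M.mulVec z i| ≤ ∑ j, |M i j| * |z j| := by
      simpa [Matrix.mulVec, dotProduct, abs_mul] using
        Finset.abs_sum_le_sum_abs (fun j => M i j * z j) Finset.univ
    have h2 : ∑ j, |M i j| * |z j| ≤ ∑ j, |M i j| * R := by
      refine Finset.sum_le_sum fun j _ => ?_
      have hzj : |z j| ≤ R := le_trans (norm_le_pi_norm z j) hz
      exact mul_le_mul_of_nonneg_left hzj (abs_nonneg _)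
    have h3 : ∑ j, |M i j| * R ≤ R * (∑ i, ∑ j, |M i j|) := by
      rw [← Finset.sum_mul, mul_comm]
      refine mul_le_mul_of_nonneg_left ?_ hR.le
      exact Finset.single_le_sum (f := fun i => ∑ j, |M i j|)
        (fun i _ => Finset.sum_nonneg fun j _ => abs_nonneg _) (Finset.mem_univ i)
    have : |M.mulVec z i| ≤ R * (∑ i, ∑ j, |M i j|) := le_trans h1 (le_trans h2 h3)
    simpa [hCdef] using this
  -- sup-norm bound entrywise
  rw [pi_norm_le_iff_of_nonneg hη.le]
  intro i
  set w : ℝ := M.mulVec z i with hwdef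
  have hwC : |w| ≤ C - 1 := hw i
  have hwlt : |δ * w| < r := by
    have : |δ * w| ≤ δ * (C - 1) := by
      rw [abs_mul, abs_of_pos hδ]
      exact mul_le_mul_of_nonneg_left hwC hδ.le
    have h2 : δ * (C - 1) < r := by
      have hlt : δ * (C - 1) < δ * (2 * C) := by
        apply mul_lt_mul_of_pos_left _ hδ
        nlinarith
      have : δ * (2 * C) = r := by
        rw [hδdef, div_mul_cancel₀ r (by positivity : (2 * C) ≠ 0)]
      linarith
    linarith
  have hmem : dist (δ * w + t₀) t₀ < r := by
    simpa [Real.dist_eq, abs_mul] using hwlt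
  have hkey := hball hmem
  simp only [Real.norm_eq_abs, smul_eq_mul, add_sub_cancel_right] at hkey
  -- hkey : |σ (δ*w + t₀) - σ t₀ - (δ*w) * d| ≤ ε * |δ*w|
  have hδd : δ * d ≠ 0 := mul_ne_zero hδ.ne' hd
  have hentry : (σ (δ * w + t₀) - σ t₀) / (δ * d) - w
      = (σ (δ * w + t₀) - σ t₀ - (δ * w) * d) / (δ * d) := by
    field_simp
  calc ‖(fun i => (σ (δ * M.mulVec z i + t₀) - σ t₀) / (δ * d)) i - M.mulVec z i‖
      = |(σ (δ * w + t₀) - σ t₀ - (δ * w) * d) / (δ * d)| := by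
        simp only [Real.norm_eq_abs, ← hwdef, hentry]
    _ = |σ (δ * w + t₀) - σ t₀ - (δ * w) * d| / (|δ| * |d|) := by
        rw [abs_div, abs_mul]
    _ ≤ (ε * |δ * w|) / (|δ| * |d|) := by
        apply div_le_div_of_nonneg_right hkey ?_ |>.trans le_rfl
        · positivity
    _ ≤ η := by
        rw [abs_mul]
        rw [div_le_iff₀ (by positivity)]
        have : ε * (|δ| * |w|) ≤ ε * (|δ| * C) := by
          have hwC' : |w| ≤ C := le_trans hwC (by linarith)
          gcongr
        calc ε * (|δ| * |w|) ≤ ε * (|δ| * C) := this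
          _ = η * (|δ| * |d|) := by
              rw [hεdef]; field_simp
end

section
/- Let σ : ℝ → ℝ be Lipschitz continuous with Lipschitz constant L_σ, and let N_L = Φ_L ∘ ··· ∘ Φ_1 : ℝ^N → ℝ^N be an L-layer neural network with layers Φ_ℓ(x) = σ(W^(ℓ) x + b^(ℓ)) (σ applied componentwise). Suppose each weight matrix W^(ℓ) satisfies: every entry has absolute value at most ω, and every row and every column of W^(ℓ) has at most γ nonzero entries. Then for any inputs f, g ∈ ℝ^N, ‖N_L(f) − N_L(g)‖₂ ≤ (L_σ ω γ)^L ‖f − g‖₂; in particular, the stability constant is independent of the dimension N. -/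
open Matrix

/-- One network layer `Φ(x) = σ (W x + b)` on Euclidean space, `σ` applied componentwise. -/
noncomputable def netLayer {N : ℕ} (σ : ℝ → ℝ) (W : Matrix (Fin N) (Fin N) ℝ)
    (b : EuclideanSpace ℝ (Fin N)) (x : EuclideanSpace ℝ (Fin N)) :
    EuclideanSpace ℝ (Fin N) :=
  WithLp.toLp 2 (fun i => σ (W.mulVec x i + b i))

/-- The `L`-layer network `N_L = Φ_L ∘ ⋯ ∘ Φ_1` with `Φ_ℓ(x) = σ (W⁽ˡ⁾ x + b⁽ˡ⁾)`. -/
noncomputable def netForward {N : ℕ} (σ : ℝ → ℝ) :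
    (L : ℕ) → (Fin L → Matrix (Fin N) (Fin N) ℝ) →
    (Fin L → EuclideanSpace ℝ (Fin N)) → EuclideanSpace ℝ (Fin N) →
    EuclideanSpace ℝ (Fin N)
  | 0, _, _, x => x
  | L + 1, W, b, x =>
      netLayer σ (W (Fin.last L)) (b (Fin.last L))
        (netForward σ L (fun ℓ => W ℓ.castSucc) (fun ℓ => b ℓ.castSucc) x)

private lemma sqnorm_eq {N : ℕ} (x : EuclideanSpace ℝ (Fin N)) :
    ‖x‖ ^ 2 = ∑ i, x i ^ 2 := by
  rw [EuclideanSpace.norm_eq, Real.sq_sqrt (by positivity)]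
  simp [sq_abs]

private lemma abs_sum_le {N : ℕ} (W : Matrix (Fin N) (Fin N) ℝ) (ω : ℝ) (γ : ℕ)
    (hω : ∀ i j, |W i j| ≤ ω)
    (hrow : ∀ i, (Finset.univ.filter fun j => W i j ≠ 0).card ≤ γ)
    (i : Fin N) : ∑ j, |W i j| ≤ ω * γ := by
  have h1 : ∑ j ∈ Finset.univ.filter (fun j => W i j ≠ 0), |W i j| = ∑ j, |W i j| :=
    Finset.sum_filter_of_ne (fun j _ h => by simpa using fun h0 => h (by simp [h0]))
  rw [← h1]
  calc ∑ j ∈ Finset.univ.filter (fun j => W i j ≠ 0), |W i j|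
      ≤ (Finset.univ.filter (fun j => W i j ≠ 0)).card • ω :=
        Finset.sum_le_card_nsmul _ _ _ (fun j _ => hω i j)
    _ = (Finset.univ.filter (fun j => W i j ≠ 0)).card * ω := nsmul_eq_mul _ _
    _ ≤ γ * ω := by
        have hω0 : 0 ≤ ω := le_trans (abs_nonneg _) (hω i i)
        exact mul_le_mul_of_nonneg_right (by exact_mod_cast hrow i) hω0
    _ = ω * γ := mul_comm _ _

private lemma mulVec_sq_bound {N : ℕ} (W : Matrix (Fin N) (Fin N) ℝ) (ω : ℝ) (γ : ℕ)
    (hω : ∀ i j, |W i j| ≤ ω)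
    (hrow : ∀ i, (Finset.univ.filter fun j => W i j ≠ 0).card ≤ γ)
    (hcol : ∀ j, (Finset.univ.filter fun i => W i j ≠ 0).card ≤ γ)
    (hωγ : 0 ≤ ω * γ) (x : Fin N → ℝ) :
    ∑ i, (W.mulVec x i) ^ 2 ≤ (ω * γ) ^ 2 * ∑ j, x j ^ 2 := by
  have rowsum : ∀ i, ∑ j, |W i j| ≤ ω * γ := abs_sum_le W ω γ hω hrow
  have colsum : ∀ j, ∑ i, |W i j| ≤ ω * γ :=
    abs_sum_le Wᵀ ω γ (fun i j => hω j i) (fun j => hcol j)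
  calc ∑ i, (W.mulVec x i) ^ 2
      ≤ ∑ i, (∑ j, |W i j| * |x j|) ^ 2 := by
        refine Finset.sum_le_sum fun i _ => ?_
        rw [← sq_abs]
        refine pow_le_pow_left₀ (abs_nonneg _) ?_ 2
        simp only [Matrix.mulVec, dotProduct]
        exact (Finset.abs_sum_le_sum_abs _ _).trans (le_of_eq (by simp [abs_mul]))
    _ ≤ ∑ i, (∑ j, |W i j|) * (∑ j, |W i j| * x j ^ 2) := by
        refine Finset.sum_le_sum fun i _ => ?_
        have cs := Finset.sum_mul_sq_le_sq_mul_sq Finset.univ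
          (fun j => Real.sqrt |W i j|) (fun j => Real.sqrt |W i j| * |x j|)
        have e1 : ∀ j, Real.sqrt |W i j| * (Real.sqrt |W i j| * |x j|) = |W i j| * |x j| := by
          intro j
          rw [← mul_assoc, Real.mul_self_sqrt (abs_nonneg _)]
        have e2 : ∀ j, (Real.sqrt |W i j|) ^ 2 = |W i j| := fun j =>
          Real.sq_sqrt (abs_nonneg _)
        have e3 : ∀ j, (Real.sqrt |W i j| * |x j|) ^ 2 = |W i j| * x j ^ 2 := by
          intro j; rw [mul_pow, e2, sq_abs]
        simpa only [e1, e2, e3] using cs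
    _ ≤ ∑ i, (ω * γ) * (∑ j, |W i j| * x j ^ 2) := by
        refine Finset.sum_le_sum fun i _ => ?_
        refine mul_le_mul_of_nonneg_right (rowsum i) ?_
        exact Finset.sum_nonneg fun j _ => mul_nonneg (abs_nonneg _) (sq_nonneg _)
    _ = (ω * γ) * ∑ j, (∑ i, |W i j|) * x j ^ 2 := by
        rw [← Finset.mul_sum, Finset.sum_comm]
        simp_rw [Finset.sum_mul]
    _ ≤ (ω * γ) * ∑ j, (ω * γ) * x j ^ 2 := by
        refine mul_le_mul_of_nonneg_left (Finset.sum_le_sum fun j _ => ?_) hωγ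
        exact mul_le_mul_of_nonneg_right (colsum j) (sq_nonneg _)
    _ = (ω * γ) ^ 2 * ∑ j, x j ^ 2 := by rw [← Finset.mul_sum]; ring

private lemma layer_sq_bound {N : ℕ} (σ : ℝ → ℝ) (Lσ : NNReal) (hσ : LipschitzWith Lσ σ)
    (W : Matrix (Fin N) (Fin N) ℝ) (b u v : EuclideanSpace ℝ (Fin N)) :
    ‖netLayer σ W b u - netLayer σ W b v‖ ^ 2 ≤
      (Lσ : ℝ) ^ 2 * ∑ i, (W.mulVec (u - v) i) ^ 2 := by
  rw [sqnorm_eq, Finset.mul_sum]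
  refine Finset.sum_le_sum fun i _ => ?_
  have h1 : |σ (W.mulVec u i + b i) - σ (W.mulVec v i + b i)| ≤
      (Lσ : ℝ) * |W.mulVec u i - W.mulVec v i| := by
    have := hσ.dist_le_mul (W.mulVec u i + b i) (W.mulVec v i + b i)
    simpa [Real.dist_eq, add_sub_add_right_eq_sub] using this
  have h2 : W.mulVec (u - v) i = W.mulVec u i - W.mulVec v i := by
    have : (u - v : EuclideanSpace ℝ (Fin N)) = (u : Fin N → ℝ) - v := rfl
    simp only [this, WithLp.ofLp_sub, Matrix.mulVec_sub, Pi.sub_apply]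
  have hsub : (netLayer σ W b u - netLayer σ W b v) i =
      σ (W.mulVec u i + b i) - σ (W.mulVec v i + b i) := by simp [netLayer]
  rw [hsub, h2, ← sq_abs, ← sq_abs (W.mulVec u i - _), ← mul_pow]
  exact pow_le_pow_left₀ (abs_nonneg _) h1 2

private lemma layer_norm_bound {N : ℕ} (σ : ℝ → ℝ) (Lσ : NNReal) (hσ : LipschitzWith Lσ σ)
    (W : Matrix (Fin N) (Fin N) ℝ) (b : EuclideanSpace ℝ (Fin N)) (ω : ℝ) (γ : ℕ)
    (hω : ∀ i j, |W i j| ≤ ω)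
    (hrow : ∀ i, (Finset.univ.filter fun j => W i j ≠ 0).card ≤ γ)
    (hcol : ∀ j, (Finset.univ.filter fun i => W i j ≠ 0).card ≤ γ)
    (hωγ : 0 ≤ ω * γ) (u v : EuclideanSpace ℝ (Fin N)) :
    ‖netLayer σ W b u - netLayer σ W b v‖ ≤ (Lσ : ℝ) * ω * γ * ‖u - v‖ := by
  have hc : 0 ≤ (Lσ : ℝ) * ω * γ * ‖u - v‖ := by
    rw [mul_assoc (Lσ : ℝ)]
    exact mul_nonneg (mul_nonneg Lσ.coe_nonneg hωγ) (norm_nonneg _)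
  rw [← pow_le_pow_iff_left₀ (norm_nonneg _) hc (two_ne_zero)]
  calc ‖netLayer σ W b u - netLayer σ W b v‖ ^ 2
      ≤ (Lσ : ℝ) ^ 2 * ∑ i, (W.mulVec (u - v) i) ^ 2 := layer_sq_bound σ Lσ hσ W b u v
    _ ≤ (Lσ : ℝ) ^ 2 * ((ω * γ) ^ 2 * ∑ j, ((u - v) j) ^ 2) := by
        refine mul_le_mul_of_nonneg_left ?_ (by positivity)
        exact mulVec_sq_bound W ω γ hω hrow hcol hωγ _
    _ = ((Lσ : ℝ) * ω * γ * ‖u - v‖) ^ 2 := by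
        rw [← sqnorm_eq]; ring

private lemma netForward_stab {N : ℕ} (σ : ℝ → ℝ) (Lσ : NNReal)
    (hσ : LipschitzWith Lσ σ) (ω : ℝ) (γ : ℕ) (hωγ : 0 ≤ ω * γ) :
    ∀ (L : ℕ) (W : Fin L → Matrix (Fin N) (Fin N) ℝ)
      (b : Fin L → EuclideanSpace ℝ (Fin N)),
      (∀ ℓ i j, |W ℓ i j| ≤ ω) →
      (∀ ℓ i, (Finset.univ.filter fun j => W ℓ i j ≠ 0).card ≤ γ) →
      (∀ ℓ j, (Finset.univ.filter fun i => W ℓ i j ≠ 0).card ≤ γ) →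
      ∀ f g : EuclideanSpace ℝ (Fin N),
      ‖netForward σ L W b f - netForward σ L W b g‖ ≤
        ((Lσ : ℝ) * ω * γ) ^ L * ‖f - g‖ := by
  intro L
  induction L with
  | zero => intro W b _ _ _ f g; simp [netForward]
  | succ L ih =>
      intro W b hω hrow hcol f g
      have hc : 0 ≤ (Lσ : ℝ) * ω * γ := by
        rw [mul_assoc]
        exact mul_nonneg Lσ.coe_nonneg hωγ
      calc ‖netForward σ (L + 1) W b f - netForward σ (L + 1) W b g‖
          ≤ (Lσ : ℝ) * ω * γ *
              ‖netForward σ L (fun ℓ => W ℓ.castSucc) (fun ℓ => b ℓ.castSucc) f -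
               netForward σ L (fun ℓ => W ℓ.castSucc) (fun ℓ => b ℓ.castSucc) g‖ := by
            exact layer_norm_bound σ Lσ hσ (W (Fin.last L)) (b (Fin.last L)) ω γ
              (hω _) (hrow _) (hcol _) hωγ _ _
        _ ≤ (Lσ : ℝ) * ω * γ * (((Lσ : ℝ) * ω * γ) ^ L * ‖f - g‖) := by
            exact mul_le_mul_of_nonneg_left
              (ih _ _ (fun ℓ => hω _) (fun ℓ => hrow _) (fun ℓ => hcol _) f g) hc
        _ = ((Lσ : ℝ) * ω * γ) ^ (L + 1) * ‖f - g‖ := by ring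

/-- Stability of an `L`-layer network with `L_σ`-Lipschitz activation whose weight matrices
have entries bounded by `ω` and at most `γ` nonzero entries in every row and column:
`‖N_L(f) - N_L(g)‖₂ ≤ (L_σ ω γ)^L ‖f - g‖₂`, a bound independent of the dimension `N`. -/
theorem sparse_network_stability {N L : ℕ} [NeZero N] (σ : ℝ → ℝ) (Lσ : NNReal)
    (hσ : LipschitzWith Lσ σ)
    (W : Fin L → Matrix (Fin N) (Fin N) ℝ) (b : Fin L → EuclideanSpace ℝ (Fin N))
    (ω : ℝ) (γ : ℕ)
    (hω : ∀ ℓ i j, |W ℓ i j| ≤ ω)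
    (hrow : ∀ ℓ i, (Finset.univ.filter fun j => W ℓ i j ≠ 0).card ≤ γ)
    (hcol : ∀ ℓ j, (Finset.univ.filter fun i => W ℓ i j ≠ 0).card ≤ γ)
    (f g : EuclideanSpace ℝ (Fin N)) :
    ‖netForward σ L W b f - netForward σ L W b g‖ ≤
      ((Lσ : ℝ) * ω * γ) ^ L * ‖f - g‖ := by
  rcases L with _ | L
  · simp [netForward]
  · have i0 : Fin N := ⟨0, Nat.pos_of_ne_zero (NeZero.ne N)⟩
    have hω0 : 0 ≤ ω := le_trans (abs_nonneg _) (hω 0 i0 i0)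
    have hωγ : 0 ≤ ω * γ := mul_nonneg hω0 (Nat.cast_nonneg γ)
    exact netForward_stab σ Lσ hσ ω γ hωγ (L + 1) W b hω hrow hcol f g
end
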